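/- Let X and Y be noetherian schemes with X separated, and let f : X → Y be a morphism of finite type which is a formal immersion at a point x ∈ X, i.e., the induced homomorphism on completed local rings Ô_{Y,f(x)} → Ô_{X,x} is surjective. Suppose T is an integral noetherian scheme and p₁, p₂ : T → X are two morphisms (T-valued points of X) such that for some point t ∈ T one has p₁(t) = p₂(t) = x, and moreover f ∘ p₁ = f ∘ p₂. Then p₁ = p₂. -/

import Mathlib

open AlgebraicGeometry IsLocalRing CategoryTheory

set_option maxHeartbeats 1000000
set_option synthInstance.maxHeartbeats 1000000

/-- The adic completion of a commutative ring `R` at an ideal `I`, realized concretely as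
the subring of the product `Π n, R ⧸ I ^ n` consisting of the sequences that are compatible
with the canonical transition maps `R ⧸ I ^ n → R ⧸ I ^ m` for `m ≤ n`. -/
def adicCompletionSubring (R : Type*) [CommRing R] (I : Ideal R) :
    Subring (Π n : ℕ, R ⧸ I ^ n) where
  carrier := {f | ∀ ⦃m n : ℕ⦄ (h : m ≤ n),
    Ideal.Quotient.factor (S := I ^ n) (T := I ^ m) (Ideal.pow_le_pow_right h) (f n) = f m}
  zero_mem' := by intro m n h; simp
  one_mem' := by intro m n h; simp
  add_mem' := by
    intro f g hf hg m n h
    simp only [Pi.add_apply, map_add, hf h, hg h]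
  neg_mem' := by
    intro f hf m n h
    simp only [Pi.neg_apply, map_neg, hf h]
  mul_mem' := by
    intro f g hf hg m n h
    simp only [Pi.mul_apply, map_mul, hf h, hg h]

variable {A B : Type*} [CommRing A] [CommRing B]

theorem pow_le_comap_pow (φ : A →+* B) {I : Ideal A} {J : Ideal B}
    (h : I ≤ J.comap φ) (n : ℕ) : I ^ n ≤ (J ^ n).comap φ := by
  rw [← Ideal.map_le_iff_le_comap, Ideal.map_pow]
  exact Ideal.pow_right_mono (Ideal.map_le_iff_le_comap.mpr h) n

/-- The ring homomorphism between adic completions induced by a ring homomorphism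
`φ : A → B` carrying the ideal `I` of `A` into the ideal `J` of `B`. -/
def adicCompletionMap (φ : A →+* B) (I : Ideal A) (J : Ideal B) (h : I ≤ J.comap φ) :
    adicCompletionSubring A I →+* adicCompletionSubring B J :=
  RingHom.codRestrict
    ((Pi.ringHom fun n : ℕ =>
        (Ideal.quotientMap (J ^ n) φ (pow_le_comap_pow φ h n)).comp
          (Pi.evalRingHom (fun n : ℕ => A ⧸ I ^ n) n)).comp
      (adicCompletionSubring A I).subtype)
    (adicCompletionSubring B J)
    (by
      rintro ⟨f, hf⟩ m n hmn
      obtain ⟨a, ha⟩ := Ideal.Quotient.mk_surjective (f n)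
      have h1 : f m = Ideal.Quotient.mk (I ^ m) a := by rw [← hf hmn, ← ha]; simp
      show Ideal.Quotient.factor _ (Ideal.quotientMap (J ^ n) φ (pow_le_comap_pow φ h n) (f n)) =
        Ideal.quotientMap (J ^ m) φ (pow_le_comap_pow φ h m) (f m)
      simp [← ha, h1, Ideal.quotientMap_mk, Ideal.Quotient.factor_mk])

/-- The homomorphism `Ô_{Y,f(x)} → Ô_{X,x}` induced on the completed local rings of the
stalks by a morphism of schemes `f : X ⟶ Y` at a point `x` of `X`. -/
noncomputable def completedStalkMap {X Y : Scheme} (f : X ⟶ Y) (x : X) :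
    adicCompletionSubring (Y.presheaf.stalk (f.base x))
        (maximalIdeal (Y.presheaf.stalk (f.base x))) →+*
      adicCompletionSubring (X.presheaf.stalk x) (maximalIdeal (X.presheaf.stalk x)) :=
  adicCompletionMap (f.stalkMap x).hom _ _
    (fun a ha => by
      rw [Ideal.mem_comap, mem_maximalIdeal, mem_nonunits_iff]
      rw [mem_maximalIdeal, mem_nonunits_iff] at ha
      exact fun hu => ha (IsLocalHom.map_nonunit a hu))

/-- A morphism of schemes `f : X ⟶ Y` is a *formal immersion* at a point `x : X` if the
induced homomorphism on completed local rings `Ô_{Y,f(x)} → Ô_{X,x}` is surjective. -/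
def IsFormalImmersionAt {X Y : Scheme} (f : X ⟶ Y) (x : X) : Prop :=
  Function.Surjective (completedStalkMap f x)

/-! ### Auxiliary lemmas -/


/-- The canonical map to the adic completion. -/
def toAdicCompletionSubring (R : Type*) [CommRing R] (I : Ideal R) :
    R →+* adicCompletionSubring R I :=
  RingHom.codRestrict (Pi.ringHom fun n : ℕ => Ideal.Quotient.mk (I ^ n)) _
    (fun a m n _ => Ideal.Quotient.factor_mk _ a)

lemma adicCompletionMap_toAdicCompletionSubring (φ : A →+* B) (I : Ideal A) (J : Ideal B)
    (h : I ≤ J.comap φ) (a : A) :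
    adicCompletionMap φ I J h (toAdicCompletionSubring A I a)
      = toAdicCompletionSubring B J (φ a) := by
  refine Subtype.ext (funext fun n => ?_)
  show Ideal.quotientMap (J ^ n) φ (pow_le_comap_pow φ h n) (Ideal.Quotient.mk (I ^ n) a)
    = Ideal.Quotient.mk (J ^ n) (φ a)
  simp [Ideal.quotientMap_mk]

lemma adicCompletionMap_comp {C : Type*} [CommRing C] (φ : A →+* B) (ψ : B →+* C)
    (I : Ideal A) (J : Ideal B) (K : Ideal C) (h₁ : I ≤ J.comap φ) (h₂ : J ≤ K.comap ψ) :
    (adicCompletionMap ψ J K h₂).comp (adicCompletionMap φ I J h₁)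
      = adicCompletionMap (ψ.comp φ) I K (fun a ha => h₂ (h₁ ha)) := by
  refine RingHom.ext fun x => Subtype.ext (funext fun n => ?_)
  obtain ⟨a, ha⟩ := Ideal.Quotient.mk_surjective (x.1 n)
  show Ideal.quotientMap (K ^ n) ψ (pow_le_comap_pow ψ h₂ n)
      (Ideal.quotientMap (J ^ n) φ (pow_le_comap_pow φ h₁ n) (x.1 n))
    = Ideal.quotientMap (K ^ n) (ψ.comp φ)
      (pow_le_comap_pow (ψ.comp φ) (fun a ha => h₂ (h₁ ha)) n) (x.1 n)
  rw [← ha]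
  simp [Ideal.quotientMap_mk]

lemma adicCompletionMap_congr (φ ψ : A →+* B) (e : φ = ψ) (I : Ideal A) (J : Ideal B)
    (h : I ≤ J.comap φ) :
    adicCompletionMap φ I J h = adicCompletionMap ψ I J (e ▸ h) := by
  subst e; rfl

lemma toAdicCompletionSubring_injective (R : Type*) [CommRing R] [IsNoetherianRing R]
    [IsLocalRing R] :
    Function.Injective (toAdicCompletionSubring R (maximalIdeal R)) := by
  refine (injective_iff_map_eq_zero _).mpr fun a ha => ?_
  have h : ∀ n : ℕ, a ∈ (maximalIdeal R) ^ n := by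
    intro n
    have h0 := congrArg (fun s : adicCompletionSubring R (maximalIdeal R) =>
      (s : Π n : ℕ, R ⧸ (maximalIdeal R) ^ n) n) ha
    have : Ideal.Quotient.mk ((maximalIdeal R) ^ n) a = 0 := h0
    rwa [Ideal.Quotient.eq_zero_iff_mem] at this
  have hbot := Ideal.iInf_pow_eq_bot_of_isLocalRing (R := R) (maximalIdeal R)
    (Ideal.IsPrime.ne_top inferInstance)
  rw [← Ideal.mem_bot, ← hbot]
  exact Ideal.mem_iInf.mpr h

lemma maximalIdeal_le_comap {R S : Type*} [CommRing R] [CommRing S] [IsLocalRing R]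
    [IsLocalRing S] (φ : R →+* S) [IsLocalHom φ] :
    maximalIdeal R ≤ (maximalIdeal S).comap φ := fun a ha => by
  rw [Ideal.mem_comap, mem_maximalIdeal, mem_nonunits_iff]
  rw [mem_maximalIdeal, mem_nonunits_iff] at ha
  exact fun hu => ha (IsLocalHom.map_nonunit a hu)

lemma completedStalkMap_eq {X Y : Scheme} (f : X ⟶ Y) (x : X)
    (h : maximalIdeal (Y.presheaf.stalk (f.base x)) ≤
      (maximalIdeal (X.presheaf.stalk x)).comap (f.stalkMap x).hom) :
    completedStalkMap f x = adicCompletionMap (f.stalkMap x).hom _ _ h := rfl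

lemma stalk_isNoetherianRing (X : Scheme) [IsLocallyNoetherian X] (x : X) :
    IsNoetherianRing (X.presheaf.stalk x) := by
  exact inferInstance

/-- **Rigidity of formal immersions** (Oesterlé; cf. Parent). Let `X`, `Y` be noetherian
schemes with `X` separated, and `f : X ⟶ Y` a morphism of finite type (i.e. locally of
finite type and quasi-compact) which is a formal immersion at `x : X`. If `T` is an
integral noetherian scheme, `p₁ p₂ : T ⟶ X` are two `T`-valued points with
`p₁ t = p₂ t = x` for some `t : T`, and `f ∘ p₁ = f ∘ p₂`, then `p₁ = p₂`. -/
theorem eq_of_formalImmersion_of_comp_eq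
    (X Y : Scheme) [IsNoetherian X] [IsNoetherian Y] [X.IsSeparated]
    (f : X ⟶ Y) [LocallyOfFiniteType f] [QuasiCompact f]
    (x : X) (hfx : IsFormalImmersionAt f x)
    (T : Scheme) [IsNoetherian T] [IsIntegral T]
    (p₁ p₂ : T ⟶ X) (t : T) (h₁ : p₁.base t = x) (h₂ : p₂.base t = x)
    (hcomp : p₁ ≫ f = p₂ ≫ f) : p₁ = p₂ := by
  subst h₁
  have e : p₁.base t = p₂.base t := h₂.symm
  set σ : X.presheaf.stalk (p₁.base t) ⟶ X.presheaf.stalk (p₂.base t) :=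
    (X.presheaf.stalkCongr (.of_eq e)).hom with hσ
  -- key: composing with f's stalk map
  have key : f.stalkMap (p₁.base t) ≫ p₁.stalkMap t
      = f.stalkMap (p₁.base t) ≫ σ ≫ p₂.stalkMap t := by
    have h3 := Scheme.Hom.stalkMap_congr_hom (p₁ ≫ f) (p₂ ≫ f) hcomp t
    rw [Scheme.Hom.stalkMap_comp, Scheme.Hom.stalkMap_comp] at h3
    rw [h3, ← Category.assoc]
    refine (Category.assoc _ _ _).symm.trans ?_
    congr 1
    rw [hσ, TopCat.Presheaf.stalkCongr_hom, TopCat.Presheaf.stalkCongr_hom]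
    exact Scheme.Hom.stalkSpecializes_stalkMap f (p₂.base t) (p₁.base t)
      (specializes_of_eq e.symm)
  -- translate `key` to the level of ring homomorphisms
  have key' : (p₁.stalkMap t).hom.comp (f.stalkMap (p₁.base t)).hom
      = ((p₂.stalkMap t).hom.comp σ.hom).comp (f.stalkMap (p₁.base t)).hom :=
    congrArg CommRingCat.Hom.hom key
  haveI : IsLocalHom σ.hom :=
    isLocalHom_of_isIso _
  haveI hNT : IsNoetherianRing (T.presheaf.stalk t) := stalk_isNoetherianRing T t
  have hloc1 : maximalIdeal (X.presheaf.stalk (p₁.base t)) ≤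
      (maximalIdeal (T.presheaf.stalk t)).comap (p₁.stalkMap t).hom :=
    maximalIdeal_le_comap _
  have hloc2 : maximalIdeal (X.presheaf.stalk (p₁.base t)) ≤
      (maximalIdeal (T.presheaf.stalk t)).comap ((p₂.stalkMap t).hom.comp σ.hom) :=
    maximalIdeal_le_comap _
  have hlocf : maximalIdeal (Y.presheaf.stalk (f.base (p₁.base t))) ≤
      (maximalIdeal (X.presheaf.stalk (p₁.base t))).comap (f.stalkMap (p₁.base t)).hom :=
    maximalIdeal_le_comap _
  -- the induced maps on completions agree
  have hcompl : adicCompletionMap (p₁.stalkMap t).hom _ _ hloc1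
      = adicCompletionMap ((p₂.stalkMap t).hom.comp σ.hom) _ _ hloc2 := by
    have hcc : (adicCompletionMap (p₁.stalkMap t).hom _ _ hloc1).comp
          (completedStalkMap f (p₁.base t))
        = (adicCompletionMap ((p₂.stalkMap t).hom.comp σ.hom) _ _ hloc2).comp
          (completedStalkMap f (p₁.base t)) := by
      rw [completedStalkMap_eq f (p₁.base t) hlocf, adicCompletionMap_comp,
        adicCompletionMap_comp]
      exact adicCompletionMap_congr _ _ key' _ _ _
    refine RingHom.ext fun b => ?_
    obtain ⟨c, rfl⟩ := hfx b
    exact DFunLike.congr_fun hcc c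
  -- deduce that the stalk maps agree
  have hstalk : p₁.stalkMap t = σ ≫ p₂.stalkMap t := by
    refine CommRingCat.hom_ext (RingHom.ext fun a => ?_)
    apply toAdicCompletionSubring_injective (T.presheaf.stalk t)
    calc toAdicCompletionSubring _ _ ((p₁.stalkMap t).hom a)
        = adicCompletionMap (p₁.stalkMap t).hom _ _ hloc1
            (toAdicCompletionSubring _ _ a) :=
          (adicCompletionMap_toAdicCompletionSubring _ _ _ _ _).symm
      _ = adicCompletionMap ((p₂.stalkMap t).hom.comp σ.hom) _ _ hloc2
            (toAdicCompletionSubring _ _ a) := by rw [hcompl]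
      _ = toAdicCompletionSubring _ _ ((p₂.stalkMap t).hom (σ.hom a)) :=
          adicCompletionMap_toAdicCompletionSubring _ _ _ _ _
  -- spread out
  obtain ⟨U, htU, hU⟩ := spread_out_unique_of_isGermInjective (X := T) (Y := X) p₁ p₂ e hstalk
  haveI : IsDominant U.ι := ⟨by
    show Dense (Set.range U.ι.base)
    rw [Scheme.Opens.range_ι]
    exact U.isOpen.dense ⟨t, htU⟩⟩
  exact ext_of_isDominant U.ι hU
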